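/- Let R be a complete discrete valuation ring with algebraically closed residue field k̄ and field of fractions k, and suppose char k̄ does not divide d. Then u_diag(d,k) = d: every diagonal form of degree d over k in more than d variables is isotropic, and there exists an anisotropic diagonal degree-d form of dimension d over k (namely ⟨1, π, π², ..., π^{d-1}⟩ for a uniformizer π). -/

import Mathlib

open IsLocalRing Polynomial

-- Hensel: d-th roots of units exist
lemma aux_pow_root (R : Type*) [CommRing R] [IsDomain R] [IsDiscreteValuationRing R]
    [IsAdicComplete (IsLocalRing.maximalIdeal R) R]
    [IsAlgClosed (IsLocalRing.ResidueField R)]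
    (d : ℕ) (hd : 0 < d)
    (hchar : ∀ p : ℕ, CharP (IsLocalRing.ResidueField R) p → ¬p ∣ d)
    (c : Rˣ) : ∃ w : R, w ^ d = (c : R) := by
  classical
  have hd0 : (d : IsLocalRing.ResidueField R) ≠ 0 := by
    intro h
    exact hchar (ringChar _) (ringChar.charP _)
      ((CharP.cast_eq_zero_iff _ (ringChar _) d).mp h)
  obtain ⟨r, hr⟩ := IsAlgClosed.exists_pow_nat_eq (residue R (c : R)) hd
  obtain ⟨a₀, ha₀⟩ := IsLocalRing.residue_surjective (R := R) r
  set f : R[X] := X ^ d - C (c : R) with hf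
  have hmonic : f.Monic := monic_X_pow_sub_C _ hd.ne'
  have hr0 : r ≠ 0 := by
    intro h
    apply (IsLocalRing.residue_ne_zero_iff_isUnit (c : R)).mpr c.isUnit
    rw [← hr, h, zero_pow hd.ne']
  have h1 : f.eval a₀ ∈ maximalIdeal R := by
    have : residue R (f.eval a₀) = 0 := by
      simp [hf, ha₀, hr, map_pow]
    exact (Ideal.Quotient.eq_zero_iff_mem).mp this
  have h2 : IsUnit (Ideal.Quotient.mk (maximalIdeal R) (f.derivative.eval a₀)) := by
    have hderiv : f.derivative.eval a₀ = (d : R) * a₀ ^ (d - 1) := by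
      simp [hf, derivative_X_pow]
    have : residue R (f.derivative.eval a₀) ≠ 0 := by
      rw [hderiv]
      simp only [map_mul, map_pow, map_natCast, ha₀]
      exact mul_ne_zero hd0 (pow_ne_zero _ hr0)
    have hu : IsUnit (f.derivative.eval a₀) :=
      (IsLocalRing.residue_ne_zero_iff_isUnit _).mp this
    exact hu.map _
  obtain ⟨a, ha, -⟩ := HenselianRing.is_henselian f hmonic a₀ h1 h2
  refine ⟨a, ?_⟩
  have : a ^ d - (c : R) = 0 := by simpa [hf, Polynomial.IsRoot] using ha
  exact sub_eq_zero.mp this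

-- descent: one step of divisibility
lemma aux_descent {R : Type*} [CommRing R] [IsDomain R] [IsDiscreteValuationRing R]
    (d : ℕ) (hd : 0 < d) (π : R) (hπ : Irreducible π)
    (y : Fin d → R) (hy : ∑ i : Fin d, π ^ (i : ℕ) * y i ^ d = 0) :
    ∀ i, π ∣ y i := by
  classical
  have key : ∀ n : ℕ, ∀ i : Fin d, (i : ℕ) = n → π ∣ y i := by
    intro n
    induction n using Nat.strong_induction_on with
    | _ n ih =>
      intro i hi
      have hilt : (i : ℕ) < d := i.isLt
      have hterm : ∀ j ∈ Finset.univ.erase i,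
          π ^ ((i : ℕ) + 1) ∣ π ^ (j : ℕ) * y j ^ d := by
        intro j hj
        have hji : j ≠ i := Finset.ne_of_mem_erase hj
        have hjine : (j : ℕ) ≠ (i : ℕ) := fun h => hji (Fin.ext h)
        rcases lt_or_gt_of_ne hjine with h | h
        · have hdvd : π ∣ y j := ih (j : ℕ) (hi ▸ h) j rfl
          have h1 : π ^ ((j : ℕ) + d) ∣ π ^ (j : ℕ) * y j ^ d := by
            rw [pow_add]
            exact mul_dvd_mul_left _ (pow_dvd_pow_of_dvd hdvd d)
          exact dvd_trans (pow_dvd_pow π (by omega)) h1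
        · exact dvd_mul_of_dvd_left (pow_dvd_pow π (by omega)) _
      have hsum : π ^ ((i : ℕ) + 1) ∣ π ^ (i : ℕ) * y i ^ d := by
        have h0 := (Finset.add_sum_erase Finset.univ
          (fun j : Fin d => π ^ (j : ℕ) * y j ^ d) (Finset.mem_univ i)).trans hy
        have h1 := eq_neg_of_add_eq_zero_left h0
        rw [h1]
        exact dvd_neg.mpr (Finset.dvd_sum hterm)
      rw [pow_succ] at hsum
      have hπ0 : π ^ (i : ℕ) ≠ 0 := pow_ne_zero _ hπ.ne_zero
      have hprime : Prime π := UniqueFactorizationMonoid.irreducible_iff_prime.mp hπ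
      exact hprime.dvd_of_dvd_pow ((mul_dvd_mul_iff_left hπ0).mp hsum)
  exact fun i => key (i : ℕ) i rfl

lemma aux_pow_dvd {R : Type*} [CommRing R] [IsDomain R] [IsDiscreteValuationRing R]
    (d : ℕ) (hd : 0 < d) (π : R) (hπ : Irreducible π) :
    ∀ (n : ℕ) (y : Fin d → R), (∑ i : Fin d, π ^ (i : ℕ) * y i ^ d = 0) → ∀ i, π ^ n ∣ y i := by
  intro n
  induction n with
  | zero => intro y _ i; simpa using one_dvd _
  | succ n ih =>
    intro y hy i
    have h1 : ∀ j, π ∣ y j := aux_descent d hd π hπ y hy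
    choose z hz using h1
    have hz' : ∑ j : Fin d, π ^ (j : ℕ) * z j ^ d = 0 := by
      have hmain : π ^ d * ∑ j : Fin d, π ^ (j : ℕ) * z j ^ d = 0 := by
        rw [Finset.mul_sum, ← hy]
        apply Finset.sum_congr rfl
        intro j _
        rw [hz j, mul_pow]
        ring
      exact (mul_eq_zero.mp hmain).resolve_left (pow_ne_zero _ hπ.ne_zero)
    rw [hz i, pow_succ']
    exact mul_dvd_mul_left _ (ih z hz' i)

lemma aux_zero_of_all_pow_dvd {R : Type*} [CommRing R] [IsDomain R] [IsDiscreteValuationRing R]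
    (π : R) (hπ : Irreducible π) (t : R) (ht : ∀ n : ℕ, π ^ n ∣ t) : t = 0 := by
  by_contra h
  obtain ⟨m, u, rfl⟩ := IsDiscreteValuationRing.eq_unit_mul_pow_irreducible h hπ
  have h1 : π ^ (m + 1) ∣ π ^ m := (Units.dvd_mul_left).mp (ht (m + 1))
  have := (pow_dvd_pow_iff ?_ ?_).mp h1
  · omega
  · exact hπ.ne_zero
  · exact hπ.not_isUnit

theorem stmt_17 (R : Type*) [CommRing R] [IsDomain R] [IsDiscreteValuationRing R]
    [IsAdicComplete (IsLocalRing.maximalIdeal R) R]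
    [IsAlgClosed (IsLocalRing.ResidueField R)]
    (d : ℕ) (hd : 0 < d)
    (hchar : ∀ p : ℕ, CharP (IsLocalRing.ResidueField R) p → ¬p ∣ d) :
    (∀ m : ℕ, d < m → ∀ a : Fin m → FractionRing R, (∀ i, a i ≠ 0) →
        ∃ x : Fin m → FractionRing R, x ≠ 0 ∧ ∑ i, a i * x i ^ d = 0) ∧
      ∀ π : R, Irreducible π →
        ∀ x : Fin d → FractionRing R,
          ∑ i : Fin d, algebraMap R (FractionRing R) (π ^ (i : ℕ)) * x i ^ d = 0 → x = 0 := by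
  classical
  set K := FractionRing R
  have hinj : Function.Injective (algebraMap R K) := IsFractionRing.injective R K
  constructor
  · -- Part 1: isotropy in > d variables
    intro m hm a ha
    obtain ⟨π, hπ⟩ := IsDiscreteValuationRing.exists_irreducible R
    obtain ⟨b, hb⟩ := IsLocalization.exist_integer_multiples (nonZeroDivisors R)
      Finset.univ a
    choose y hy using fun i => hb i (Finset.mem_univ i)
    have hbK : algebraMap R K (b : R) ≠ 0 := by
      rw [map_ne_zero_iff _ hinj]
      exact nonZeroDivisors.coe_ne_zero b
    have hya : ∀ i, algebraMap R K (y i) = algebraMap R K (b : R) * a i := by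
      intro i
      rw [hy i, Algebra.smul_def]
    have hy0 : ∀ i, y i ≠ 0 := by
      intro i h
      apply mul_ne_zero hbK (ha i)
      rw [← hya i, h, map_zero]
    choose n u hu using fun i => IsDiscreteValuationRing.eq_unit_mul_pow_irreducible (hy0 i) hπ
    -- main construction, assuming n i ≤ n j
    have main : ∀ i j : Fin m, i ≠ j → n i % d = n j % d → n i ≤ n j →
        ∃ x : Fin m → K, x ≠ 0 ∧ ∑ k, a k * x k ^ d = 0 := by
      intro i j hij hmod hle
      obtain ⟨e, he⟩ := (Nat.modEq_iff_dvd' hle).mp hmod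
      obtain ⟨w, hw⟩ := aux_pow_root R d hd hchar (-(u j * (u i)⁻¹))
      set x : Fin m → K := fun k =>
        if k = i then algebraMap R K (w * π ^ e) else if k = j then 1 else 0 with hxdef
      have hxj : x j = 1 := by
        simp [hxdef, hij.symm]
      have hxi : x i = algebraMap R K (w * π ^ e) := by
        simp only [hxdef, if_pos rfl]
      refine ⟨x, ?_, ?_⟩
      · intro h
        have := congrFun h j
        rw [hxj] at this
        exact one_ne_zero this
      · -- key identity in R
        have hkey : y i * (w * π ^ e) ^ d + y j = 0 := by
          have hp : π ^ n i * π ^ (e * d) = π ^ n j := by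
            have he' : n j - n i = e * d := by rw [he, mul_comm]
            rw [← pow_add]
            congr 1
            omega
          have huu : (u i : R) * ((u i)⁻¹ : Rˣ) = 1 := (u i).mul_inv
          rw [hu i, hu j, mul_pow, hw, ← pow_mul]
          have hcval : ((-(u j * (u i)⁻¹) : Rˣ) : R) = -((u j : R) * ((u i)⁻¹ : Rˣ)) := by
            simp
          rw [hcval]
          have hring : (u i : R) * π ^ n i * (-((u j : R) * ((u i)⁻¹ : Rˣ)) * π ^ (e * d))
              + (u j : R) * π ^ n j
              = -(((u i : R) * ((u i)⁻¹ : Rˣ)) * (u j : R) * (π ^ n i * π ^ (e * d)))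
                + (u j : R) * π ^ n j := by ring
          rw [hring, huu, hp]
          ring
        have hterm : ∀ k : Fin m, algebraMap R K (b : R) * (a k * x k ^ d)
            = (if k = i then algebraMap R K (y i * (w * π ^ e) ^ d) else 0)
              + (if k = j then algebraMap R K (y j) else 0) := by
          intro k
          by_cases hki : k = i
          · subst hki
            rw [if_pos rfl, if_neg hij, hxi, add_zero]
            simp only [map_mul, map_pow]
            rw [hya k]
            ring
          · rw [if_neg hki]
            by_cases hkj : k = j
            · subst hkj
              rw [if_pos rfl, hxj, zero_add, hya k]
              ring
            · have hxk : x k = 0 := by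
                simp only [hxdef, if_neg hki, if_neg hkj]
              rw [if_neg hkj, hxk, zero_pow hd.ne', mul_zero, mul_zero, add_zero]
        have hsum0 : algebraMap R K (b : R) * ∑ k, a k * x k ^ d = 0 := by
          rw [Finset.mul_sum]
          rw [Finset.sum_congr rfl fun k _ => hterm k]
          rw [Finset.sum_add_distrib, Finset.sum_ite_eq' Finset.univ i,
            Finset.sum_ite_eq' Finset.univ j]
          simp only [Finset.mem_univ, if_pos]
          rw [← map_add, hkey, map_zero]
        exact (mul_eq_zero.mp hsum0).resolve_left hbK
    obtain ⟨i, j, hij, hmod⟩ := Fintype.exists_ne_map_eq_of_card_lt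
      (fun i : Fin m => (⟨n i % d, Nat.mod_lt _ hd⟩ : Fin d)) (by simpa using hm)
    have hmod' : n i % d = n j % d := by
      simpa [Fin.mk.injEq] using hmod
    rcases le_total (n i) (n j) with h | h
    · exact main i j hij hmod' h
    · exact main j i hij.symm hmod'.symm h
  · -- Part 2: anisotropy of ⟨1, π, ..., π^{d-1}⟩
    intro π hπ x hx
    obtain ⟨b, hb⟩ := IsLocalization.exist_integer_multiples (nonZeroDivisors R)
      Finset.univ x
    choose y hy using fun i => hb i (Finset.mem_univ i)
    have hbK : algebraMap R K (b : R) ≠ 0 := by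
      rw [map_ne_zero_iff _ hinj]
      exact nonZeroDivisors.coe_ne_zero b
    have hyx : ∀ i, algebraMap R K (y i) = algebraMap R K (b : R) * x i := by
      intro i
      rw [hy i, Algebra.smul_def]
    have heq : ∑ i : Fin d, π ^ (i : ℕ) * y i ^ d = 0 := by
      apply hinj
      rw [map_sum, map_zero]
      have hterm : ∀ i : Fin d, algebraMap R K (π ^ (i : ℕ) * y i ^ d)
          = (algebraMap R K (b : R)) ^ d
            * (algebraMap R K (π ^ (i : ℕ)) * x i ^ d) := by
        intro i
        simp only [map_mul, map_pow]
        rw [hyx i, mul_pow]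
        ring
      rw [Finset.sum_congr rfl fun i _ => hterm i, ← Finset.mul_sum, hx, mul_zero]
    have hy0 : ∀ i, y i = 0 := fun i =>
      aux_zero_of_all_pow_dvd π hπ (y i) fun n => aux_pow_dvd d hd π hπ n y heq i
    funext i
    have h0 : algebraMap R K (b : R) * x i = 0 := by
      rw [← hyx i, hy0 i, map_zero]
    exact (mul_eq_zero.mp h0).resolve_left hbK
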